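/- Let G(z) = Σ_{l≥1}(1 - z^l) ρ(l) with ρ(l) ≥ 0 and Σ_{l≥1} l ρ(l) = m < ∞. Suppose G satisfies on (0,1): (1/2)(zG'(z) + m)(zG'(z) + m + 1) + ((1+z)/(2(1-z))) G(z) - m = 0. Then for every l ≥ 1, the coefficients satisfy Σ_{i=l}^∞ ρ(i) + (1/2) Σ_{i=1}^{l-1} i(l-i) ρ(i) ρ(l-i) - ((m + 1/2) l + 1/2) ρ(l) = 0. -/

import Mathlib

open Filter Set
open scoped Topology NNReal

private def pc (ρ : ℕ → ℝ) (l : ℕ) : ℝ := l * ρ l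
private def qc (ρ : ℕ → ℝ) (l : ℕ) : ℝ := if l = 0 then 0 else ρ l
private def wc (ρ : ℕ → ℝ) (l : ℕ) : ℝ := ∑ k ∈ Finset.range (l+1), pc ρ k * pc ρ (l - k)
private def uc (m : ℝ) (ρ : ℕ → ℝ) (l : ℕ) : ℝ :=
  (m^2 - m) * (if l = 0 then 1 else 0) - (2*m+1) * pc ρ l + wc ρ l
private def vc (s : ℝ) (ρ : ℕ → ℝ) (l : ℕ) : ℝ := s * (if l = 0 then 1 else 0) - qc ρ l
private def cc (m s : ℝ) (ρ : ℕ → ℝ) : ℕ → ℝ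
  | 0 => uc m ρ 0 + vc s ρ 0
  | (n+1) => uc m ρ (n+1) + vc s ρ (n+1) + (vc s ρ n - uc m ρ n)

private lemma pc_zero (ρ : ℕ → ℝ) : pc ρ 0 = 0 := by simp [pc]

private lemma wc_eq (ρ : ℕ → ℝ) (l : ℕ) :
    wc ρ l = ∑ i ∈ Finset.Ico 1 l, (i:ℝ) * ((l:ℝ) - i) * ρ i * ρ (l-i) := by
  rw [wc, Finset.range_eq_Ico, ← Finset.sum_subset
    (Finset.Ico_subset_Ico (Nat.zero_le 1) (Nat.le_succ l))]
  · refine Finset.sum_congr rfl fun i hi => ?_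
    rw [Finset.mem_Ico] at hi
    have h1 : 1 ≤ i := hi.1
    have h2 : i < l := hi.2
    have hle : i ≤ l := le_of_lt h2
    simp only [pc]
    rw [Nat.cast_sub hle]
    ring
  · intro x hx hx'
    rw [Finset.mem_Ico] at hx hx'
    push_neg at hx'
    rcases Nat.eq_zero_or_pos x with h0 | h1
    · simp [h0, pc]
    · have : l ≤ x := hx' h1
      have : x = l := le_antisymm (Nat.lt_succ_iff.mp hx.2) this
      simp [this, pc]

private lemma sum_pc {ρ : ℕ → ℝ} (hm : Summable (fun n : ℕ => ((n+1:ℕ):ℝ) * ρ (n+1))) :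
    Summable (pc ρ) := by
  apply (summable_nat_add_iff 1).mp
  exact hm.congr fun n => by simp [pc]

private lemma sum_rho {ρ : ℕ → ℝ} (hρ : ∀ l : ℕ, 1 ≤ l → 0 ≤ ρ l)
    (hm : Summable (fun n : ℕ => ((n+1:ℕ):ℝ) * ρ (n+1))) :
    Summable (fun n : ℕ => ρ (n+1)) := by
  refine Summable.of_nonneg_of_le (fun n => hρ (n+1) (Nat.succ_le_succ (Nat.zero_le n)))
    (fun n => ?_) hm
  have h1 : (1:ℝ) ≤ ((n+1:ℕ):ℝ) := by exact_mod_cast Nat.succ_le_succ (Nat.zero_le n)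
  nlinarith [hρ (n+1) (Nat.succ_le_succ (Nat.zero_le n))]

private lemma sum_qc {ρ : ℕ → ℝ} (hρ : ∀ l : ℕ, 1 ≤ l → 0 ≤ ρ l)
    (hm : Summable (fun n : ℕ => ((n+1:ℕ):ℝ) * ρ (n+1))) : Summable (qc ρ) := by
  apply (summable_nat_add_iff 1).mp
  exact (sum_rho hρ hm).congr fun n => by simp [qc]

private lemma pc_nonneg {ρ : ℕ → ℝ} (hρ : ∀ l : ℕ, 1 ≤ l → 0 ≤ ρ l) (l : ℕ) : 0 ≤ pc ρ l := by
  cases l with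
  | zero => simp [pc]
  | succ n => exact mul_nonneg (by positivity) (hρ (n+1) (Nat.succ_le_succ (Nat.zero_le n)))

private lemma qc_nonneg {ρ : ℕ → ℝ} (hρ : ∀ l : ℕ, 1 ≤ l → 0 ≤ ρ l) (l : ℕ) : 0 ≤ qc ρ l := by
  cases l with
  | zero => simp [qc]
  | succ n => simpa [qc] using hρ (n+1) (Nat.succ_le_succ (Nat.zero_le n))

private lemma wc_nonneg {ρ : ℕ → ℝ} (hρ : ∀ l : ℕ, 1 ≤ l → 0 ≤ ρ l) (l : ℕ) : 0 ≤ wc ρ l :=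
  Finset.sum_nonneg fun k _ => mul_nonneg (pc_nonneg hρ k) (pc_nonneg hρ _)

-- weighted summability,  |z| ≤ 1
private lemma sum_pc_norm {ρ : ℕ → ℝ} (hρ : ∀ l : ℕ, 1 ≤ l → 0 ≤ ρ l)
    (hm : Summable (fun n : ℕ => ((n+1:ℕ):ℝ) * ρ (n+1))) {z : ℝ} (hz : |z| ≤ 1) :
    Summable (fun l : ℕ => ‖pc ρ l * z ^ l‖) := by
  refine Summable.of_nonneg_of_le (fun l => norm_nonneg _) (fun l => ?_) (sum_pc hm)
  rw [norm_mul, norm_pow, Real.norm_eq_abs, Real.norm_eq_abs,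
    abs_of_nonneg (pc_nonneg hρ l)]
  calc pc ρ l * |z| ^ l ≤ pc ρ l * 1 := by
        refine mul_le_mul_of_nonneg_left ?_ (pc_nonneg hρ l)
        exact pow_le_one₀ (abs_nonneg z) hz
    _ = pc ρ l := mul_one _

private lemma sum_qc_norm {ρ : ℕ → ℝ} (hρ : ∀ l : ℕ, 1 ≤ l → 0 ≤ ρ l)
    (hm : Summable (fun n : ℕ => ((n+1:ℕ):ℝ) * ρ (n+1))) {z : ℝ} (hz : |z| ≤ 1) :
    Summable (fun l : ℕ => ‖qc ρ l * z ^ l‖) := by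
  refine Summable.of_nonneg_of_le (fun l => norm_nonneg _) (fun l => ?_) (sum_qc hρ hm)
  rw [norm_mul, norm_pow, Real.norm_eq_abs, Real.norm_eq_abs,
    abs_of_nonneg (qc_nonneg hρ l)]
  calc qc ρ l * |z| ^ l ≤ qc ρ l * 1 := by
        refine mul_le_mul_of_nonneg_left ?_ (qc_nonneg hρ l)
        exact pow_le_one₀ (abs_nonneg z) hz
    _ = qc ρ l := mul_one _

private lemma wc_mul_pow {ρ : ℕ → ℝ} (z : ℝ) (n : ℕ) :
    (∑ k ∈ Finset.range (n+1), (pc ρ k * z ^ k) * (pc ρ (n-k) * z ^ (n-k)))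
      = wc ρ n * z ^ n := by
  rw [wc, Finset.sum_mul]
  refine Finset.sum_congr rfl fun k hk => ?_
  rw [Finset.mem_range, Nat.lt_succ_iff] at hk
  have : z ^ k * z ^ (n - k) = z ^ n := by
    rw [← pow_add, Nat.add_sub_cancel' hk]
  calc pc ρ k * z ^ k * (pc ρ (n-k) * z ^ (n-k))
      = pc ρ k * pc ρ (n-k) * (z ^ k * z ^ (n-k)) := by ring
    _ = pc ρ k * pc ρ (n-k) * z ^ n := by rw [this]

private lemma sum_wc_pow {ρ : ℕ → ℝ} (hρ : ∀ l : ℕ, 1 ≤ l → 0 ≤ ρ l)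
    (hm : Summable (fun n : ℕ => ((n+1:ℕ):ℝ) * ρ (n+1))) {z : ℝ} (hz : |z| ≤ 1) :
    Summable (fun n : ℕ => wc ρ n * z ^ n) := by
  have h := summable_norm_sum_mul_range_of_summable_norm
    (sum_pc_norm hρ hm hz) (sum_pc_norm hρ hm hz)
  refine h.of_norm.congr fun n => ?_
  exact wc_mul_pow z n

private def tsh (m s : ℝ) (ρ : ℕ → ℝ) (z : ℝ) : ℕ → ℝ
  | 0 => 0
  | (n+1) => (vc s ρ n - uc m ρ n) * z^(n+1)

private lemma hasSum_cc (m s : ℝ) {ρ : ℕ → ℝ} (hρ : ∀ l : ℕ, 1 ≤ l → 0 ≤ ρ l)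
    (hm : Summable (fun n : ℕ => ((n+1:ℕ):ℝ) * ρ (n+1))) {z : ℝ} (hz : |z| ≤ 1) :
    HasSum (fun l => cc m s ρ l * z ^ l)
      ((1-z) * ((m^2 - m) - (2*m+1) * (∑' l, pc ρ l * z^l) + (∑' l, pc ρ l * z^l)^2)
        + (1+z) * (s - ∑' l, qc ρ l * z^l)) := by
  set Pv := ∑' l, pc ρ l * z^l with hPv
  set Qv := ∑' l, qc ρ l * z^l with hQv
  have hP : HasSum (fun l => pc ρ l * z^l) Pv := (sum_pc_norm hρ hm hz).of_norm.hasSum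
  have hQ : HasSum (fun l => qc ρ l * z^l) Qv := (sum_qc_norm hρ hm hz).of_norm.hasSum
  have h1 : HasSum (fun l : ℕ => (if l = 0 then (1:ℝ) else 0) * z ^ l) 1 := by
    have hfun : (fun l : ℕ => (if l = 0 then (1:ℝ) else 0) * z ^ l)
        = fun l : ℕ => if l = 0 then (1:ℝ) else 0 := by
      funext l; split <;> simp_all
    rw [hfun]; exact hasSum_ite_eq 0 1
  have hW : HasSum (fun l => wc ρ l * z^l) (Pv * Pv) := by
    have hsumW := (summable_norm_sum_mul_range_of_summable_norm
      (sum_pc_norm hρ hm hz) (sum_pc_norm hρ hm hz)).of_norm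
    have h := hsumW.hasSum
    rw [← tsum_mul_tsum_eq_tsum_sum_range_of_summable_norm
      (sum_pc_norm hρ hm hz) (sum_pc_norm hρ hm hz)] at h
    have hfun : (fun n => ∑ k ∈ Finset.range (n+1),
        (pc ρ k * z ^ k) * (pc ρ (n-k) * z ^ (n-k))) = fun l => wc ρ l * z ^ l :=
      funext (wc_mul_pow z)
    rwa [hfun] at h
  have hU : HasSum (fun l => uc m ρ l * z ^ l) ((m^2-m) - (2*m+1) * Pv + Pv*Pv) := by
    have h := ((h1.mul_left (m^2-m)).sub (hP.mul_left (2*m+1))).add hW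
    have hfun : (fun l => ((m^2-m) * ((if l = 0 then (1:ℝ) else 0) * z^l)
        - (2*m+1)*(pc ρ l * z^l)) + wc ρ l * z^l) = fun l => uc m ρ l * z^l := by
      funext l; simp only [uc]; ring
    rw [hfun] at h
    rw [mul_one] at h; exact h
  have hV : HasSum (fun l => vc s ρ l * z ^ l) (s - Qv) := by
    have h := (h1.mul_left s).sub hQ
    have hfun : (fun l => s * ((if l = 0 then (1:ℝ) else 0) * z^l) - qc ρ l * z^l)
        = fun l => vc s ρ l * z^l := by
      funext l; simp only [vc]; ring
    rw [hfun] at h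
    rw [mul_one] at h; exact h
  have hT : HasSum (tsh m s ρ z)
      (z * ((s - Qv) - ((m^2-m) - (2*m+1)*Pv + Pv*Pv))) := by
    refine (hasSum_nat_add_iff' 1).mp ?_
    have h := (hV.sub hU).mul_left z
    have hfun : (fun n => z * (vc s ρ n * z^n - uc m ρ n * z^n))
        = fun n => tsh m s ρ z (n+1) := by
      funext n; show _ = (vc s ρ n - uc m ρ n) * z^(n+1); ring
    rw [hfun] at h
    have h0 : ∑ i ∈ Finset.range 1, tsh m s ρ z i = 0 := by
      simp [tsh]
    rw [h0, sub_zero]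
    exact h
  have h := (hU.add hV).add hT
  have hfun : (fun l => (uc m ρ l * z ^ l + vc s ρ l * z ^ l) + tsh m s ρ z l)
      = fun l => cc m s ρ l * z ^ l := by
    funext l
    cases l with
    | zero => simp only [tsh, cc]; ring
    | succ n => simp only [tsh, cc]; ring
  rw [hfun] at h
  convert h using 1; ring

private lemma sum_cc_norm (m s : ℝ) {ρ : ℕ → ℝ} (hρ : ∀ l : ℕ, 1 ≤ l → 0 ≤ ρ l)
    (hm : Summable (fun n : ℕ => ((n+1:ℕ):ℝ) * ρ (n+1))) :
    Summable (fun n => |cc m s ρ n| * (2:ℝ)⁻¹ ^ n) := by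
  have hz : |(2:ℝ)⁻¹| ≤ 1 := by rw [abs_of_nonneg] <;> norm_num
  have hau : Summable (fun n => |uc m ρ n| * (2:ℝ)⁻¹ ^ n) := by
    have h1 : Summable (fun n : ℕ => |m^2-m| * ((if n = 0 then (1:ℝ) else 0) * (2:ℝ)⁻¹ ^ n)) := by
      apply summable_of_ne_finset_zero (s := {0})
      intro b hb
      simp only [Finset.mem_singleton] at hb
      simp [hb]
    have h2 : Summable (fun n => |2*m+1| * (pc ρ n * (2:ℝ)⁻¹ ^ n)) :=
      ((sum_pc_norm hρ hm hz).of_norm).mul_left _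
    have h3 : Summable (fun n => wc ρ n * (2:ℝ)⁻¹ ^ n) := sum_wc_pow hρ hm hz
    refine Summable.of_nonneg_of_le (fun n => by positivity) (fun n => ?_) ((h1.add h2).add h3)
    have hb : |uc m ρ n| ≤ |m^2-m| * (if n = 0 then (1:ℝ) else 0) + |2*m+1| * pc ρ n + wc ρ n := by
      rw [uc]
      refine (abs_add_le _ _).trans (add_le_add ?_ (le_of_eq (abs_of_nonneg (wc_nonneg hρ n))))
      refine (abs_sub _ _).trans (add_le_add ?_ ?_)
      · rw [abs_mul]; gcongr; split <;> simp
      · rw [abs_mul]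
        gcongr
        exact le_of_eq (abs_of_nonneg (pc_nonneg hρ n))
    calc |uc m ρ n| * (2:ℝ)⁻¹ ^ n
        ≤ (|m^2-m| * (if n = 0 then (1:ℝ) else 0) + |2*m+1| * pc ρ n + wc ρ n) * (2:ℝ)⁻¹ ^ n := by
          gcongr
      _ = |m^2-m| * ((if n = 0 then (1:ℝ) else 0) * (2:ℝ)⁻¹ ^ n)
          + |2*m+1| * (pc ρ n * (2:ℝ)⁻¹ ^ n) + wc ρ n * (2:ℝ)⁻¹ ^ n := by ring
  have hav : Summable (fun n => |vc s ρ n| * (2:ℝ)⁻¹ ^ n) := by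
    have h1 : Summable (fun n : ℕ => |s| * ((if n = 0 then (1:ℝ) else 0) * (2:ℝ)⁻¹ ^ n)) := by
      apply summable_of_ne_finset_zero (s := {0})
      intro b hb
      simp only [Finset.mem_singleton] at hb
      simp [hb]
    have h2 : Summable (fun n => qc ρ n * (2:ℝ)⁻¹ ^ n) := (sum_qc_norm hρ hm hz).of_norm
    refine Summable.of_nonneg_of_le (fun n => by positivity) (fun n => ?_) (h1.add h2)
    have hb : |vc s ρ n| ≤ |s| * (if n = 0 then (1:ℝ) else 0) + qc ρ n := by
      rw [vc]
      refine (abs_sub _ _).trans (add_le_add ?_ ?_)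
      · rw [abs_mul]; gcongr; split <;> simp
      · exact le_of_eq (abs_of_nonneg (qc_nonneg hρ n))
    calc |vc s ρ n| * (2:ℝ)⁻¹ ^ n
        ≤ (|s| * (if n = 0 then (1:ℝ) else 0) + qc ρ n) * (2:ℝ)⁻¹ ^ n := by gcongr
      _ = |s| * ((if n = 0 then (1:ℝ) else 0) * (2:ℝ)⁻¹ ^ n) + qc ρ n * (2:ℝ)⁻¹ ^ n := by ring
  have hD : Summable (fun n => (|uc m ρ n| + |vc s ρ n|) * (2:ℝ)⁻¹ ^ n) := by
    refine (hau.add hav).congr fun n => ?_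
    ring
  have hE : Summable (fun n : ℕ => (Nat.rec 0
      (fun k _ => (|uc m ρ k| + |vc s ρ k|) * (2:ℝ)⁻¹ ^ (k+1)) n : ℝ)) := by
    apply (summable_nat_add_iff 1).mp
    refine (hD.mul_right (2:ℝ)⁻¹).congr fun n => ?_
    show (|uc m ρ n| + |vc s ρ n|) * (2:ℝ)⁻¹ ^ n * (2:ℝ)⁻¹
        = (|uc m ρ n| + |vc s ρ n|) * (2:ℝ)⁻¹ ^ (n+1)
    ring
  refine Summable.of_nonneg_of_le (fun n => by positivity) (fun n => ?_) (hD.add hE)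
  cases n with
  | zero =>
    show |cc m s ρ 0| * _ ≤ _ + (0:ℝ)
    rw [add_zero]
    gcongr
    show |uc m ρ 0 + vc s ρ 0| ≤ _
    exact abs_add_le _ _
  | succ k =>
    show |cc m s ρ (k+1)| * (2:ℝ)⁻¹ ^ (k+1)
        ≤ (|uc m ρ (k+1)| + |vc s ρ (k+1)|) * (2:ℝ)⁻¹ ^ (k+1)
          + (|uc m ρ k| + |vc s ρ k|) * (2:ℝ)⁻¹ ^ (k+1)
    have hb : |cc m s ρ (k+1)| ≤ (|uc m ρ (k+1)| + |vc s ρ (k+1)|) + (|uc m ρ k| + |vc s ρ k|) := by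
      show |uc m ρ (k+1) + vc s ρ (k+1) + (vc s ρ k - uc m ρ k)| ≤ _
      calc |uc m ρ (k+1) + vc s ρ (k+1) + (vc s ρ k - uc m ρ k)|
          ≤ |uc m ρ (k+1) + vc s ρ (k+1)| + |vc s ρ k - uc m ρ k| := abs_add_le _ _
        _ ≤ (|uc m ρ (k+1)| + |vc s ρ (k+1)|) + (|vc s ρ k| + |uc m ρ k|) :=
            add_le_add (abs_add_le _ _) (abs_sub _ _)
        _ = _ := by ring
    calc |cc m s ρ (k+1)| * (2:ℝ)⁻¹ ^ (k+1)
        ≤ ((|uc m ρ (k+1)| + |vc s ρ (k+1)|) + (|uc m ρ k| + |vc s ρ k|)) * (2:ℝ)⁻¹ ^ (k+1) := by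
          gcongr
      _ = _ := by ring

open FormalMultilinearSeries in
private lemma aux_coeffs_eq_zero (c : ℕ → ℝ)
    (hs : Summable (fun n => |c n| * (2:ℝ)⁻¹ ^ n))
    (hz : ∀ z ∈ Set.Ioo (0:ℝ) 2⁻¹, (∑' n, c n * z ^ n) = 0) : ∀ n, c n = 0 := by
  set p := ofScalars ℝ c with hp
  have hrad : (0:ENNReal) < p.radius := by
    have h2 : ((2⁻¹:ℝ≥0) : ENNReal) ≤ p.radius := by
      apply p.le_radius_of_summable_norm
      refine hs.congr fun n => ?_
      rw [hp, ofScalars_norm, Real.norm_eq_abs]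
      norm_num
    refine lt_of_lt_of_le ?_ h2
    simp
  have hball : HasFPowerSeriesOnBall (ofScalarsSum c) p 0 p.radius :=
    p.hasFPowerSeriesOnBall hrad
  have hat : HasFPowerSeriesAt (ofScalarsSum c) p 0 := hball.hasFPowerSeriesAt
  have hfreq : ∃ᶠ z in 𝓝[≠] (0:ℝ), ofScalarsSum c z = 0 := by
    have hev : ∀ᶠ z in 𝓝[>] (0:ℝ), ofScalarsSum c z = 0 := by
      filter_upwards [Ioo_mem_nhdsGT_of_mem (by norm_num : (0:ℝ) ∈ Set.Ico 0 2⁻¹)] with x hx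
      rw [ofScalars_sum_eq]
      simpa [smul_eq_mul] using hz x hx
    exact hev.frequently.filter_mono (nhdsWithin_mono _ (fun x hx => ne_of_gt hx))
  have hev0 : ofScalarsSum c =ᶠ[𝓝 (0:ℝ)] 0 :=
    hat.analyticAt.frequently_zero_iff_eventually_zero.mp hfreq
  have hp0 : p = 0 := hat.eq_zero_of_eventually hev0
  intro n
  rw [hp] at hp0
  exact ((ofScalars_eq_zero (𝕜 := ℝ) ℝ n).mp (by rw [hp0]; rfl))

theorem stmt_18 (m : ℝ) (G : ℝ → ℝ) (ρ : ℕ → ℝ)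
    (hρ : ∀ l : ℕ, 1 ≤ l → 0 ≤ ρ l)
    (hser : ∀ z ∈ Set.Icc (0:ℝ) 1,
      HasSum (fun l : ℕ => (1 - z^(l+1)) * ρ (l+1)) (G z))
    (hmass : HasSum (fun l : ℕ => ((l+1 : ℕ) : ℝ) * ρ (l+1)) m)
    (heq : ∀ z ∈ Set.Ioo (0:ℝ) 1,
      (1/2) * (z * deriv G z + m) * (z * deriv G z + m + 1)
        + ((1+z) / (2*(1-z))) * G z - m = 0) :
    ∀ l : ℕ, 1 ≤ l →
      (∑' i : ℕ, ρ (i + l))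
        + (1/2) * (∑ i ∈ Finset.Ico 1 l, (i:ℝ) * ((l:ℝ) - i) * ρ i * ρ (l-i))
        - ((m + 1/2) * l + 1/2) * ρ l = 0 := by
  have hρ' : ∀ n : ℕ, 0 ≤ ρ (n+1) := fun n => hρ (n+1) (Nat.succ_le_succ (Nat.zero_le n))
  have hm : Summable (fun n : ℕ => ((n+1:ℕ):ℝ) * ρ (n+1)) := hmass.summable
  have hsr : Summable (fun n : ℕ => ρ (n+1)) := sum_rho hρ hm
  set s : ℝ := ∑' n : ℕ, ρ (n+1) with hs_def
  have hGval : ∀ y ∈ Set.Icc (0:ℝ) 1, HasSum (fun n : ℕ => ρ (n+1) * y^(n+1)) (s - G y) := by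
    intro y hy
    have h := hsr.hasSum.sub (hser y hy)
    have hfun : (fun n : ℕ => ρ (n+1) - (1 - y^(n+1)) * ρ (n+1))
        = fun n : ℕ => ρ (n+1) * y^(n+1) := by funext n; ring
    rwa [hfun] at h
  have hQval : ∀ y ∈ Set.Icc (0:ℝ) 1, (∑' l : ℕ, qc ρ l * y^l) = s - G y := by
    intro y hy
    have habs : |y| ≤ 1 := by rw [abs_of_nonneg hy.1]; exact hy.2
    have h1 : Summable (fun l : ℕ => qc ρ l * y^l) := (sum_qc_norm hρ hm habs).of_norm
    calc ∑' l : ℕ, qc ρ l * y^l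
        = qc ρ 0 * y^0 + ∑' n : ℕ, qc ρ (n+1) * y^(n+1) := Summable.tsum_eq_zero_add h1
      _ = ∑' n : ℕ, ρ (n+1) * y^(n+1) := by simp [qc]
      _ = s - G y := (hGval y hy).tsum_eq
  have hPval : ∀ z ∈ Set.Ioo (0:ℝ) 1, (∑' l : ℕ, pc ρ l * z^l) = -(z * deriv G z) := by
    intro z hz
    obtain ⟨hz0, hz1⟩ := hz
    set r : ℝ := (1+z)/2 with hr
    have hr0 : 0 < r := by rw [hr]; linarith
    have hr1 : r < 1 := by rw [hr]; linarith
    have hzr : z ∈ Set.Ioo (-r) r := ⟨by rw [hr]; linarith, by rw [hr]; linarith⟩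
    have h0r : (0:ℝ) ∈ Set.Ioo (-r) r := ⟨by linarith, hr0⟩
    have hu : Summable (fun n : ℕ => ((n+1:ℕ):ℝ) * ρ (n+1) * r^n) := by
      refine Summable.of_nonneg_of_le (fun n => ?_) (fun n => ?_) hm
      · have := hρ' n; positivity
      · calc ((n+1:ℕ):ℝ) * ρ (n+1) * r^n ≤ ((n+1:ℕ):ℝ) * ρ (n+1) * 1 := by
              refine mul_le_mul_of_nonneg_left ?_ (mul_nonneg (Nat.cast_nonneg _) (hρ' n))
              exact pow_le_one₀ hr0.le hr1.le
          _ = ((n+1:ℕ):ℝ) * ρ (n+1) := mul_one _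
    have hD : HasDerivAt (fun y : ℝ => ∑' n : ℕ, ρ (n+1) * y^(n+1))
        (∑' n : ℕ, ρ (n+1) * (((n+1:ℕ):ℝ) * z^n)) z := by
      refine hasDerivAt_tsum_of_isPreconnected hu isOpen_Ioo
        (g := fun (n : ℕ) (y : ℝ) => ρ (n+1) * y^(n+1))
        (g' := fun (n : ℕ) (y : ℝ) => ρ (n+1) * (((n+1:ℕ):ℝ) * y^n))
        (isPreconnected_Ioo) (fun n y _ => ?_) (fun n y hy => ?_) h0r ?_ hzr
      · have h := (hasDerivAt_pow (n+1) y).const_mul (ρ (n+1))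
        simpa using h
      · rw [Real.norm_eq_abs, abs_mul, abs_mul, abs_pow,
          abs_of_nonneg (hρ' n), abs_of_nonneg (Nat.cast_nonneg _ : (0:ℝ) ≤ ((n+1:ℕ):ℝ))]
        have hyr : |y| ≤ r := (abs_lt.mpr ⟨hy.1, hy.2⟩).le
        calc ρ (n+1) * (((n+1:ℕ):ℝ) * |y|^n) ≤ ρ (n+1) * (((n+1:ℕ):ℝ) * r^n) := by
              refine mul_le_mul_of_nonneg_left ?_ (hρ' n)
              refine mul_le_mul_of_nonneg_left ?_ (by positivity)
              exact pow_le_pow_left₀ (abs_nonneg y) hyr n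
          _ = ((n+1:ℕ):ℝ) * ρ (n+1) * r^n := by ring
      · refine summable_zero.congr fun n => ?_
        simp
    have hEv : G =ᶠ[𝓝 z] fun y => s - ∑' n : ℕ, ρ (n+1) * y^(n+1) := by
      filter_upwards [isOpen_Ioo.mem_nhds (⟨hz0, hz1⟩ : z ∈ Set.Ioo (0:ℝ) 1)] with y hy
      have h := (hGval y (Set.Ioo_subset_Icc_self hy)).tsum_eq
      linarith
    have hDG : HasDerivAt G (-(∑' n : ℕ, ρ (n+1) * (((n+1:ℕ):ℝ) * z^n))) z := by
      have h := (hasDerivAt_const z s).sub hD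
      rw [zero_sub] at h
      exact h.congr_of_eventuallyEq hEv
    have hderiv : deriv G z = -(∑' n : ℕ, ρ (n+1) * (((n+1:ℕ):ℝ) * z^n)) := hDG.deriv
    have habs : |z| ≤ 1 := by rw [abs_of_pos hz0]; exact hz1.le
    have hsum : Summable (fun l : ℕ => pc ρ l * z^l) := (sum_pc_norm hρ hm habs).of_norm
    calc ∑' l : ℕ, pc ρ l * z^l
        = pc ρ 0 * z^0 + ∑' n : ℕ, pc ρ (n+1) * z^(n+1) := Summable.tsum_eq_zero_add hsum
      _ = ∑' n : ℕ, z * (ρ (n+1) * (((n+1:ℕ):ℝ) * z^n)) := by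
          rw [pc_zero, zero_mul, zero_add]
          refine tsum_congr fun n => ?_
          rw [pc]
          push_cast
          ring
      _ = z * ∑' n : ℕ, ρ (n+1) * (((n+1:ℕ):ℝ) * z^n) := tsum_mul_left
      _ = -(z * deriv G z) := by rw [hderiv]; ring
  have hcc : ∀ n, cc m s ρ n = 0 := by
    apply aux_coeffs_eq_zero _ (sum_cc_norm m s hρ hm)
    intro z hz
    have hz1 : z ∈ Set.Ioo (0:ℝ) 1 := ⟨hz.1, lt_trans hz.2 (by norm_num)⟩
    have habs : |z| ≤ 1 := by rw [abs_of_pos hz1.1]; exact hz1.2.le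
    have hsum := hasSum_cc m s hρ hm habs
    rw [hsum.tsum_eq, hPval z hz1, hQval z (Set.Ioo_subset_Icc_self hz1)]
    have heqz := heq z hz1
    have h1z : (1:ℝ) - z ≠ 0 := by have := hz1.2; intro h; linarith
    field_simp at heqz
    linear_combination heqz
  -- final assembly
  have hRsum : ∀ k : ℕ, Summable (fun i : ℕ => ρ (i + (k+1))) := by
    intro k
    refine ((summable_nat_add_iff k).mpr hsr).congr fun n => ?_
    exact congrArg ρ (by omega)
  have hRrec : ∀ k : ℕ, (∑' i : ℕ, ρ (i + (k+1))) = ρ (k+1) + ∑' i : ℕ, ρ (i + (k+2)) := by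
    intro k
    rw [Summable.tsum_eq_zero_add (hRsum k)]
    simp only [zero_add]
    congr 1
    exact tsum_congr fun i => congrArg ρ (by omega)
  have hvc0 : vc s ρ 0 = s := by simp [vc, qc]
  have hvcS : ∀ k : ℕ, vc s ρ (k+1) = -ρ (k+1) := fun k => by simp [vc, qc]
  have hR1 : (∑' i : ℕ, ρ (i + 1)) = s := by rw [hs_def]
  have hmain : ∀ n : ℕ, uc m ρ (n+1) + (∑' i : ℕ, ρ (i + (n+2))) + (∑' i : ℕ, ρ (i + (n+1))) = 0 := by
    intro n
    induction n with
    | zero =>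
      have h0 := hcc 0
      have h1 := hcc 1
      have e0 : cc m s ρ 0 = uc m ρ 0 + vc s ρ 0 := rfl
      have e1 : cc m s ρ 1 = uc m ρ 1 + vc s ρ 1 + (vc s ρ 0 - uc m ρ 0) := rfl
      rw [e0, hvc0] at h0
      rw [e1, hvc0, hvcS 0] at h1
      have hr := hRrec 0
      rw [hR1] at hr
      linarith
    | succ k ih =>
      have h2 := hcc (k+2)
      have e2 : cc m s ρ (k+2) = uc m ρ (k+2) + vc s ρ (k+2) + (vc s ρ (k+1) - uc m ρ (k+1)) := rfl
      rw [e2, hvcS (k+1), hvcS k] at h2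
      have hr1 := hRrec (k+1)
      have hr2 := hRrec k
      linarith
  intro l hl
  obtain ⟨n, rfl⟩ : ∃ n, l = n + 1 := ⟨l - 1, (Nat.succ_pred_eq_of_pos hl).symm⟩
  have h := hmain n
  have h2 := hRrec n
  have huc : uc m ρ (n+1) = -((2*m+1) * (((n+1:ℕ):ℝ) * ρ (n+1))) + wc ρ (n+1) := by
    simp [uc, pc]
  rw [← wc_eq ρ (n+1)]
  have hsub : ∀ i : ℕ, (n+1+1 : ℕ) = n+2 := fun _ => rfl
  push_cast
  push_cast at h huc h2
  linear_combination (1/2) * h + (1/2) * h2 - (1/2) * huc
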